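/- Given a codebook 𝒞 of size e^{nR} with ordinary (list size 1) mismatched-decoding error probability ε, construct the codebook 𝒞' of size e^{n(R+Θ)} consisting of e^{nΘ} identical copies of each codeword of 𝒞. Then the list-decoding error probability of 𝒞' with constant list size e^{nΘ} (error meaning the number of codewords with metric ≥ that of the transmitted codeword exceeds e^{nΘ}) equals ε. Consequently ℰ^{(n)}_q(R+Θ, Θ) ≤ ℰ^{(n)}_q(R), where ℰ^{(n)}_q denotes the infimum over codebooks of the respective error probabilities. -/
import Mathlib


open Finset Real
open scoped Classical

/-- Ordinary (list size 1) mismatched-decoding error probability of the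
codebook `c` over the channel `W` with metric `q` (uniform messages):
an error occurs if the transmitted codeword is not the unique maximizer. -/
noncomputable def ordErr {𝒳 𝒴 ι : Type} [Fintype 𝒴] [Fintype ι]
    (W : 𝒳 → 𝒴 → ℝ) (q : 𝒳 → 𝒴 → ℝ) (c : ι → 𝒳) : ℝ :=
  (1 / (Fintype.card ι : ℝ)) * ∑ k, ∑ y,
    W (c k) y * (if ∃ j, j ≠ k ∧ q (c j) y ≥ q (c k) y then 1 else 0)

/-- List-decoding error probability with constant list size `L`: an error
occurs if the number of codewords (counted with multiplicity) whose metric is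
at least that of the transmitted codeword exceeds `L`. -/
noncomputable def listErr {𝒳 𝒴 ι : Type} [Fintype 𝒴] [Fintype ι]
    (W : 𝒳 → 𝒴 → ℝ) (q : 𝒳 → 𝒴 → ℝ) (c : ι → 𝒳) (L : ℝ) : ℝ :=
  (1 / (Fintype.card ι : ℝ)) * ∑ m, ∑ y,
    W (c m) y *
      (if L < ((Finset.univ.filter
          (fun m' => q (c m') y ≥ q (c m) y)).card : ℝ) then 1 else 0)


lemma aux_one_lt_card {ι : Type} (s : Finset ι) (k : ι) (hk : k ∈ s) :
    1 < s.card ↔ ∃ j, j ∈ s ∧ j ≠ k := by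
  constructor
  · intro h
    obtain ⟨a, ha, b, hb, hab⟩ := Finset.one_lt_card.mp h
    by_cases hak : a = k
    · exact ⟨b, hb, by simpa [hak] using hab.symm⟩
    · exact ⟨a, ha, hak⟩
  · rintro ⟨j, hj, hjk⟩
    exact Finset.one_lt_card.mpr ⟨j, hj, k, hk, hjk⟩

/-- Replication construction: copying each codeword `e^{nΘ}` times turns an
ordinary mismatched code of rate `R` into a list code of rate `R+Θ` and list
size `e^{nΘ}` with the same error probability; hence
`ℰ^{(n)}_q(R+Θ,Θ) ≤ ℰ^{(n)}_q(R)`. -/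
theorem stmt_14 {𝒳 𝒴 : Type} [Fintype 𝒴] [Nonempty 𝒳]
    (K L : ℕ) (hK : 1 ≤ K) (hL : 1 ≤ L)
    (n R Θ : ℝ) (hn : 0 < n) (hΘ : 0 ≤ Θ)
    (hKR : (K : ℝ) = Real.exp (n * R)) (hLΘ : (L : ℝ) = Real.exp (n * Θ))
    (W : 𝒳 → 𝒴 → ℝ) (hW0 : ∀ x y, 0 ≤ W x y) (hW1 : ∀ x, ∑ y, W x y = 1)
    (q : 𝒳 → 𝒴 → ℝ) :
    (∀ c : Fin K → 𝒳,
        listErr W q (fun ml : Fin K × Fin L => c ml.1) (L : ℝ) = ordErr W q c)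
    ∧ (⨅ c' : Fin K × Fin L → 𝒳, listErr W q c' (L : ℝ))
        ≤ ⨅ c : Fin K → 𝒳, ordErr W q c := by
  
  have hLpos : (0:ℕ) < L := hL
  have hKpos : (0:ℕ) < K := hK
  have hmain : ∀ c : Fin K → 𝒳,
      listErr W q (fun ml : Fin K × Fin L => c ml.1) (L : ℝ) = ordErr W q c := by
    intro c
    unfold listErr ordErr
    have hcard : ∀ (k : Fin K) (y : 𝒴),
        ((Finset.univ.filter
          (fun m' : Fin K × Fin L => q (c m'.1) y ≥ q (c k) y)).card)
        = L * ((Finset.univ.filter (fun j : Fin K => q (c j) y ≥ q (c k) y)).card) := by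
      intro k y
      rw [Finset.card_filter, Finset.card_filter, Fintype.sum_prod_type]
      simp [Finset.mul_sum, mul_comm]
      rw [Finset.card_filter, Finset.mul_sum]
      simp [mul_ite]
    have hind : ∀ (k : Fin K) (y : 𝒴),
        ((if (L:ℝ) < ((Finset.univ.filter
            (fun m' : Fin K × Fin L => q (c m'.1) y ≥ q (c k) y)).card : ℝ) then (1:ℝ) else 0))
        = (if ∃ j, j ≠ k ∧ q (c j) y ≥ q (c k) y then (1:ℝ) else 0) := by
      intro k y
      have hkmem : k ∈ Finset.univ.filter (fun j : Fin K => q (c j) y ≥ q (c k) y) := by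
        simp
      have hiff : (L:ℝ) < ((Finset.univ.filter
            (fun m' : Fin K × Fin L => q (c m'.1) y ≥ q (c k) y)).card : ℝ)
          ↔ ∃ j, j ≠ k ∧ q (c j) y ≥ q (c k) y := by
        have hL1 : (1:ℝ) ≤ (L:ℝ) := by exact_mod_cast hL
        rw [hcard k y]
        push_cast
        rw [show ((L:ℝ) < (L:ℝ) * ((Finset.univ.filter
              (fun j : Fin K => q (c j) y ≥ q (c k) y)).card : ℝ))
            ↔ 1 < ((Finset.univ.filter (fun j : Fin K => q (c j) y ≥ q (c k) y)).card : ℝ) from by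
          constructor
          · intro h
            by_contra hcon
            push_neg at hcon
            nlinarith [hL1]
          · intro h
            nlinarith [hL1]]
        rw [show (1:ℝ) < ((Finset.univ.filter (fun j : Fin K => q (c j) y ≥ q (c k) y)).card : ℝ)
            ↔ 1 < (Finset.univ.filter (fun j : Fin K => q (c j) y ≥ q (c k) y)).card from by
          exact_mod_cast Iff.rfl]
        rw [aux_one_lt_card _ k hkmem]
        simp only [Finset.mem_filter, Finset.mem_univ, true_and]
        constructor
        · rintro ⟨j, hj1, hj2⟩; exact ⟨j, hj2, hj1⟩
        · rintro ⟨j, hj1, hj2⟩; exact ⟨j, hj2, hj1⟩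
      simp [hiff]
    have hsum : (∑ m : Fin K × Fin L, ∑ y,
        W (c m.1) y * (if (L:ℝ) < ((Finset.univ.filter
          (fun m' : Fin K × Fin L => q (c m'.1) y ≥ q (c m.1) y)).card : ℝ) then (1:ℝ) else 0))
        = (L : ℝ) * ∑ k : Fin K, ∑ y,
          W (c k) y * (if ∃ j, j ≠ k ∧ q (c j) y ≥ q (c k) y then (1:ℝ) else 0) := by
      rw [Fintype.sum_prod_type]
      rw [Finset.mul_sum]
      refine Finset.sum_congr rfl fun k _ => ?_
      simp only [hind]
      rw [Finset.sum_const, Finset.card_univ, Fintype.card_fin, nsmul_eq_mul]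
    rw [hsum]
    have hK' : (0:ℝ) < (K:ℝ) := by exact_mod_cast hKpos
    have hL' : (0:ℝ) < (L:ℝ) := by exact_mod_cast hLpos
    rw [Fintype.card_prod, Fintype.card_fin, Fintype.card_fin]
    push_cast
    field_simp
    ring
  refine ⟨hmain, ?_⟩
  have hbdd : BddBelow (Set.range fun c' : Fin K × Fin L → 𝒳 => listErr W q c' (L:ℝ)) := by
    refine ⟨0, ?_⟩
    rintro _ ⟨c', rfl⟩
    unfold listErr
    apply mul_nonneg (by positivity)
    apply Finset.sum_nonneg; intro m _
    apply Finset.sum_nonneg; intro y _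
    apply mul_nonneg (hW0 _ _)
    split <;> norm_num
  refine le_ciInf fun c => ?_
  calc (⨅ c' : Fin K × Fin L → 𝒳, listErr W q c' (L : ℝ))
      ≤ listErr W q (fun ml : Fin K × Fin L => c ml.1) (L : ℝ) := ciInf_le hbdd _
    _ = ordErr W q c := hmain c
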